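/- For every real number p > 1, the family (λ_σ^{-p})_{σ ∈ Γ} is summable, and its sum satisfies ∑_{σ ∈ Γ} λ_σ^{-p} ≤ exp(∑_{k=1}^{∞} k^{-p}) < ∞. -/

import Mathlib

open scoped BigOperators

/-- `λ_σ = ∏_{k ∈ σ} (k+1)`, with `λ_∅ = 1`. -/
noncomputable def lam (σ : Finset ℕ) : ℝ := ∏ k ∈ σ, ((k : ℝ) + 1)

/-- For every real `p > 1`, the family `(λ_σ^{-p})_{σ ∈ Γ}` is summable and
`∑_{σ ∈ Γ} λ_σ^{-p} ≤ exp (∑_{k=1}^∞ k^{-p})`. -/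
theorem stmt0 (p : ℝ) (hp : 1 < p) :
    Summable (fun σ : Finset ℕ => lam σ ^ (-p)) ∧
    ∑' σ : Finset ℕ, lam σ ^ (-p) ≤ Real.exp (∑' k : ℕ, ((k : ℝ) + 1) ^ (-p)) := by
  set f : ℕ → ℝ := fun k => ((k : ℝ) + 1) ^ (-p) with hf
  have hf0 : ∀ k, 0 ≤ f k := fun k => Real.rpow_nonneg (by positivity) _
  have hfs : Summable f := by
    have h1 : Summable (fun n : ℕ => (n : ℝ) ^ (-p)) :=
      (Real.summable_nat_rpow (p := -p)).2 (by linarith)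
    have h2 := (summable_nat_add_iff 1).2 h1
    simpa [hf] using h2
  have hlam : ∀ σ : Finset ℕ, lam σ ^ (-p) = ∏ k ∈ σ, f k := by
    intro σ
    rw [lam, ← Real.finset_prod_rpow σ _ (fun i _ => by positivity)]
  have hbound : ∀ S : Finset (Finset ℕ), ∑ σ ∈ S, (∏ k ∈ σ, f k) ≤ Real.exp (∑' k, f k) := by
    intro S
    set T : Finset ℕ := S.sup id with hT
    have hsub : S ⊆ T.powerset := fun σ hσ => Finset.mem_powerset.2 (Finset.le_sup (f := id) hσ)
    calc ∑ σ ∈ S, ∏ k ∈ σ, f k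
        ≤ ∑ σ ∈ T.powerset, ∏ k ∈ σ, f k :=
          Finset.sum_le_sum_of_subset_of_nonneg hsub
            (fun σ _ _ => Finset.prod_nonneg fun k _ => hf0 k)
      _ = ∏ k ∈ T, (f k + 1) := by
          rw [Finset.prod_add]; simp
      _ ≤ ∏ k ∈ T, Real.exp (f k) :=
          Finset.prod_le_prod (fun k _ => by positivity)
            (fun k _ => Real.add_one_le_exp (f k))
      _ = Real.exp (∑ k ∈ T, f k) := (Real.exp_sum T f).symm
      _ ≤ Real.exp (∑' k, f k) :=
          Real.exp_le_exp.2 (Summable.sum_le_tsum T (fun k _ => hf0 k) hfs)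
  have hsum : Summable (fun σ : Finset ℕ => lam σ ^ (-p)) := by
    apply summable_of_sum_le (c := Real.exp (∑' k, f k))
      (fun σ => by rw [hlam]; exact Finset.prod_nonneg fun k _ => hf0 k)
    intro S
    rw [Finset.sum_congr rfl fun σ _ => hlam σ]
    exact hbound S
  refine ⟨hsum, ?_⟩
  refine Summable.tsum_le_of_sum_le hsum ?_
  intro S
  rw [Finset.sum_congr rfl fun σ _ => hlam σ]
  exact hbound S
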